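/- Let G be a group, N ≥ 2 an integer, and s, v ∈ G with s^N = 1, satisfying far-commutation. Let q be a divisor of N with q ≥ 2 and r ≥ 1 an integer. Then the root F̃_{q,r} := s^r f_0 is invariant under translation by q sites: s^{−q} · (s^r f_0) · s^q = s^r f_0. -/
import Mathlib


/-- The translated gate `v_i := s^{-i} v s^i`. -/
def vgate {G : Type*} [Group G] (s v : G) (i : ℤ) : G := s ^ (-i) * v * s ^ i

/-- The layer `f_m := v_{m+(N/q−1)q} ⋯ v_{m+q} · v_m`. -/
def layer {G : Type*} [Group G] (s v : G) (N q : ℕ) (m : ℤ) : G :=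
  (((List.range (N / q)).reverse).map (fun k => vgate s v (m + (k : ℤ) * (q : ℤ)))).prod

/-- Far-commutation: gates commute unless their site difference is ±1 mod N. -/
def FarCommute {G : Type*} [Group G] (s v : G) (N : ℕ) : Prop :=
  ∀ i j : ℤ, ¬ (i - j ≡ 1 [ZMOD (N : ℤ)]) → ¬ (i - j ≡ -1 [ZMOD (N : ℤ)]) →
    vgate s v i * vgate s v j = vgate s v j * vgate s v i

/-- The Floquet operator `F = f_{(q−1)r} ⋯ f_r · f_0`. -/
def floquet {G : Type*} [Group G] (s v : G) (N q r : ℕ) : G :=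
  (((List.range q).reverse).map (fun j => layer s v N q ((j : ℤ) * (r : ℤ)))).prod

lemma coeM_eq (l : List ℕ) : (do let a ← l; pure ((a : ℤ))) = l.map Nat.cast := by
  induction l with
  | nil => rfl
  | cons a t ih => simp_all [List.flatMap_cons]

lemma layer_eq {G : Type*} [Group G] (s v : G) (N q : ℕ) (m : ℤ) :
    layer s v N q m
      = (((List.range (N / q)).reverse).map
          (fun k : ℕ => vgate s v (m + (k : ℤ) * (q : ℤ)))).prod := by
  unfold layer
  rw [coeM_eq, List.map_map]
  rfl

/-- The root `F̃_{q,r} = s^r f_0` is invariant under translation by `q`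
sites. -/
theorem root_translation_invariant {G : Type*} [Group G] (N : ℕ) (hN : 2 ≤ N)
    (s v : G) (hs : s ^ N = 1) (hcomm : FarCommute s v N)
    (q : ℕ) (hq : q ∣ N) (hq2 : 2 ≤ q) (r : ℕ) (hr : 1 ≤ r) :
    (s ^ q)⁻¹ * (s ^ r * layer s v N q 0) * s ^ q = s ^ r * layer s v N q 0 := by
  have hsz : s ^ (N : ℤ) = 1 := by rw [zpow_natCast, hs]
  have hvconj : ∀ i : ℤ, (s ^ q)⁻¹ * vgate s v i * s ^ q = vgate s v (i + q) := by
    intro i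
    simp only [vgate, ← zpow_natCast s q, neg_add, zpow_add, zpow_neg]
    group
  have hper : ∀ i : ℤ, vgate s v (i + N) = vgate s v i := by
    intro i
    simp only [vgate, neg_add, zpow_add, zpow_neg, hsz, inv_one, one_mul, mul_one]
  have hcom0 : ∀ k : ℕ, Commute (vgate s v 0) (vgate s v (((k : ℤ) + 1) * q)) := by
    intro k
    have hqN : (q : ℤ) ∣ (N : ℤ) := Int.natCast_dvd_natCast.mpr hq
    have h3 : (q : ℤ) ∣ ((k : ℤ) + 1) * q := dvd_mul_left _ _
    have h1 : ¬ ((0 : ℤ) - ((k : ℤ) + 1) * q ≡ 1 [ZMOD (N : ℤ)]) := by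
      intro h
      have hd : (N : ℤ) ∣ 1 - (0 - ((k : ℤ) + 1) * q) := Int.ModEq.dvd h
      have h2 : (q : ℤ) ∣ 1 - (0 - ((k : ℤ) + 1) * q) := hqN.trans hd
      have he : (1 : ℤ) = (1 - (0 - ((k : ℤ) + 1) * q)) - ((k : ℤ) + 1) * q := by ring
      have : (q : ℤ) ∣ 1 := he ▸ dvd_sub h2 h3
      have := Int.le_of_dvd one_pos this
      omega
    have h2 : ¬ ((0 : ℤ) - ((k : ℤ) + 1) * q ≡ -1 [ZMOD (N : ℤ)]) := by
      intro h
      have hd : (N : ℤ) ∣ -1 - (0 - ((k : ℤ) + 1) * q) := Int.ModEq.dvd h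
      have h2 : (q : ℤ) ∣ -1 - (0 - ((k : ℤ) + 1) * q) := hqN.trans hd
      have he : (-1 : ℤ) = (-1 - (0 - ((k : ℤ) + 1) * q)) - ((k : ℤ) + 1) * q := by ring
      have : (q : ℤ) ∣ 1 := (dvd_neg).mp (he ▸ dvd_sub h2 h3)
      have := Int.le_of_dvd one_pos this
      omega
    exact hcomm 0 (((k : ℤ) + 1) * q) h1 h2
  have hconj : ∀ l : List G, (s ^ q)⁻¹ * l.prod * s ^ q
      = (l.map (fun x => (s ^ q)⁻¹ * x * s ^ q)).prod := by
    intro l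
    induction l with
    | nil => simp
    | cons a t ih =>
      simp only [List.prod_cons, List.map_cons, ← ih]
      group
  have key : (s ^ q)⁻¹ * layer s v N q 0 * s ^ q = layer s v N q 0 := by
    have hq0 : 0 < q := by omega
    have hL1 : 1 ≤ N / q := Nat.one_le_div_iff hq0 |>.mpr (Nat.le_of_dvd (by omega) hq)
    obtain ⟨Lm, hLm⟩ : ∃ Lm, N / q = Lm + 1 := ⟨N / q - 1, by omega⟩
    have hNq : ((Lm : ℤ) + 1) * q = (N : ℤ) := by
      have := Nat.div_mul_cancel hq
      rw [hLm] at this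
      push_cast [← this]
      ring
    rw [layer_eq, hLm, hconj, List.map_map]
    have hmap1 : ((fun x => (s ^ q)⁻¹ * x * s ^ q) ∘
        fun k : ℕ => vgate s v (0 + (k : ℤ) * q))
        = fun k : ℕ => vgate s v ((k : ℤ) * q + q) := by
      funext k
      simp only [Function.comp, zero_add, hvconj]
    rw [hmap1]
    conv_rhs => rw [List.range_succ_eq_map]
    rw [List.range_succ]
    simp only [List.reverse_append, List.reverse_cons, List.reverse_nil, List.nil_append,
      List.singleton_append, List.map_cons, List.prod_cons, List.map_reverse, List.map_map,
      List.map_append, List.prod_append, List.prod_nil, mul_one]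
    have hhead : vgate s v ((Lm : ℤ) * q + q) = vgate s v (0 + 0 * (q : ℤ)) := by
      have h0 : (Lm : ℤ) * q + q = 0 + (N : ℤ) := by rw [← hNq]; ring
      rw [h0, hper]
      norm_num
    rw [hhead]
    have hfun : ((fun k : ℕ => vgate s v (0 + (k : ℤ) * q)) ∘ Nat.succ)
        = fun k : ℕ => vgate s v ((k : ℤ) * q + q) := by
      funext k
      simp only [Function.comp, zero_add, Nat.succ_eq_add_one]
      congr 1
      push_cast
      ring
    rw [hfun]
    have hc : Commute (vgate s v (0 + 0 * (q : ℤ)))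
        (((List.range Lm).map (fun k : ℕ => vgate s v ((k : ℤ) * q + q))).reverse).prod := by
      apply Commute.list_prod_right
      intro x hx
      simp only [List.mem_reverse, List.mem_map, List.mem_range] at hx
      obtain ⟨k, _, rfl⟩ := hx
      have h := hcom0 k
      have harg : ((k : ℤ) + 1) * q = (k : ℤ) * q + q := by ring
      rw [harg] at h
      simpa using h
    simpa using hc.eq
  have hsr : Commute ((s ^ q)⁻¹) (s ^ r) := (Commute.pow_pow_self s q r).inv_left
  calc (s ^ q)⁻¹ * (s ^ r * layer s v N q 0) * s ^ q
      = s ^ r * ((s ^ q)⁻¹ * layer s v N q 0 * s ^ q) := by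
        rw [← mul_assoc, hsr.eq]; group
    _ = s ^ r * layer s v N q 0 := by rw [key]
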